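/- arXiv:math/0202022 — 2 statements merged into one kernel-verified Lean document; each statement's English description precedes it below -/
import Mathlib

section
/- Let τ = (s_0, s_h) : O_{P³} ⊕ O_{P³}(−h) → E(k) be a morphism of rank-two vector bundles on P³, where E is a rank-two vector bundle with first Chern class c_1, and s_0 ∈ H^0(E(k)), s_h ∈ H^0(E(k+h)) are sections with zero loci curves C and Γ_h respectively. Then det(τ) is a global section of O_{P³}(c_1 + 2k + h), and its zero surface S = V(det τ) contains both C and Γ_h; moreover the cokernel G of τ satisfies G ≅ I_{C/S}(c_1 + 2k) ⊗ O(−2k) ≅ I_{Γ_h/S}(c_1 + h) up to twist, yielding I_{C/S} ≅ I_{Γ_h/S}(h). -/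
open Pointwise

section Aux
variable {R : Type*} [CommRing R]

lemma reg_aux {p q : R} (h : RingTheory.Sequence.IsRegular R [p, q]) :
    (∀ a : R, p * a = 0 → a = 0) ∧
      (∀ a : R, q * a ∈ Ideal.span {p} → a ∈ Ideal.span {p}) := by
  rw [RingTheory.Sequence.isRegular_cons_iff] at h
  obtain ⟨h1, h2⟩ := h
  rw [RingTheory.Sequence.isRegular_cons_iff] at h2
  have h3 := h2.1
  have hsm : (p • ⊤ : Submodule R R) = Ideal.span {p} := by
    rw [← Submodule.ideal_span_singleton_smul, smul_eq_mul, Ideal.mul_top]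
  constructor
  · intro a ha
    have := h1 (show p • a = p • 0 by simp [smul_eq_mul, ha])
    simpa using this
  · intro a ha
    have key : (q • (Submodule.Quotient.mk a : QuotSMulTop p R)) =
        q • (0 : QuotSMulTop p R) := by
      rw [smul_zero, ← Submodule.Quotient.mk_smul, Submodule.Quotient.mk_eq_zero, hsm,
        smul_eq_mul]
      exact ha
    rw [← hsm]
    exact (Submodule.Quotient.mk_eq_zero _).mp (h3 key)

noncomputable def psi (p1 p2 : R) (I : Ideal R) : R × R →ₗ[R] R ⧸ I :=
  (Submodule.mkQ (I : Submodule R R)) ∘ₗ (p2 • LinearMap.fst R R R - p1 • LinearMap.snd R R R)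

lemma psi_apply (p1 p2 : R) (I : Ideal R) (x : R × R) :
    psi p1 p2 I x = Ideal.Quotient.mk I (x.1 * p2 - x.2 * p1) := by
  simp [psi, smul_eq_mul, mul_comm, ← Ideal.Quotient.mk_eq_mk, Submodule.Quotient.mk''_eq_mk]

lemma ker_psi (p1 p2 q1 q2 : R) (hreg : RingTheory.Sequence.IsRegular R [p1, p2]) :
    LinearMap.ker (psi p1 p2 (Ideal.span {p1 * q2 - p2 * q1})) =
      Submodule.span R {(p1, p2), (q1, q2)} := by
  obtain ⟨hp1, hp2⟩ := reg_aux hreg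
  apply le_antisymm
  · rintro ⟨a, b⟩ hab
    rw [LinearMap.mem_ker, psi_apply, Ideal.Quotient.eq_zero_iff_mem,
      Ideal.mem_span_singleton'] at hab
    obtain ⟨c, hc⟩ := hab
    have h1 : p2 * (a + c * q1) ∈ Ideal.span {p1} := by
      rw [Ideal.mem_span_singleton']
      exact ⟨b + c * q2, by linear_combination hc⟩
    obtain ⟨t, ht⟩ := Ideal.mem_span_singleton'.mp (hp2 _ h1)
    have h2 : b + c * q2 = t * p2 := by
      have h0 : p1 * ((b + c * q2) - t * p2) = 0 := by
        linear_combination hc - p2 * ht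
      have := hp1 _ h0
      linear_combination this
    rw [Submodule.mem_span_pair]
    refine ⟨t, -c, ?_⟩
    have e1 : t • (p1, p2) + (-c) • (q1, q2) = (t * p1 + -c * q1, t * p2 + -c * q2) := by
      simp [Prod.ext_iff, smul_eq_mul]
    rw [e1, Prod.ext_iff]
    constructor
    · linear_combination ht
    · linear_combination -h2
  · rw [Submodule.span_le]
    rintro x (rfl | rfl) <;>
      simp only [SetLike.mem_coe, LinearMap.mem_ker, psi_apply]
    · rw [show p1 * p2 - p2 * p1 = 0 by ring, map_zero]
    · rw [Ideal.Quotient.eq_zero_iff_mem, Ideal.mem_span_singleton']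
      exact ⟨-1, by ring⟩

lemma range_psi (p1 p2 : R) (I : Ideal R) :
    LinearMap.range (psi p1 p2 I) =
      Submodule.restrictScalars R
        ((Ideal.span {p1, p2}).map (Ideal.Quotient.mk I)) := by
  apply le_antisymm
  · rintro _ ⟨⟨a, b⟩, rfl⟩
    rw [psi_apply]
    simp only [Submodule.restrictScalars_mem, map_sub, map_mul]
    have hp1 : Ideal.Quotient.mk I p1 ∈ (Ideal.span {p1, p2}).map (Ideal.Quotient.mk I) :=
      Ideal.mem_map_of_mem _ (Ideal.subset_span (by simp))
    have hp2 : Ideal.Quotient.mk I p2 ∈ (Ideal.span {p1, p2}).map (Ideal.Quotient.mk I) :=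
      Ideal.mem_map_of_mem _ (Ideal.subset_span (by simp))
    exact sub_mem (Ideal.mul_mem_left _ _ hp2) (Ideal.mul_mem_left _ _ hp1)
  · intro x hx
    simp only [Submodule.restrictScalars_mem] at hx
    rw [Ideal.map_span, Set.image_pair, Ideal.mem_span_pair] at hx
    obtain ⟨u, v, huv⟩ := hx
    obtain ⟨p, rfl⟩ := Ideal.Quotient.mk_surjective u
    obtain ⟨q, rfl⟩ := Ideal.Quotient.mk_surjective v
    exact ⟨(q, -p), by rw [psi_apply]; rw [← huv]; push_cast; ring_nf; rw [← map_mul, ← map_mul, ← map_add]; congr 1; ring⟩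

end Aux

section Main

variable {R : Type*} [CommRing R]

noncomputable def cokerEquiv (p1 p2 : R) (I : Ideal R) (T : Submodule R (R × R))
    (hker : LinearMap.ker (psi p1 p2 I) = T) :
    ((R × R) ⧸ T) ≃ₗ[R] ((Ideal.span {p1, p2}).map (Ideal.Quotient.mk I)) :=
  (Submodule.quotEquivOfEq _ _ hker.symm).trans <|
    ((psi p1 p2 I).quotKerEquivRange).trans <|
      (LinearEquiv.ofEq _ _ (range_psi p1 p2 I)).trans <|
        (Submodule.restrictScalarsEquiv R _ _
          ((Ideal.span {p1, p2}).map (Ideal.Quotient.mk I))).restrictScalars R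

end Main


/-- Let `τ = (s₀, s_h) : O_{ℙ³} ⊕ O_{ℙ³}(−h) → E(k)` be a
morphism of rank-two bundles on `ℙ³`, with `E` of first Chern class `c₁`, and
`s₀ ∈ H⁰(E(k))`, `s_h ∈ H⁰(E(k+h))` sections with zero loci the curves `C`, `Γ_h`.
Then `det τ ∈ H⁰(O_{ℙ³}(c₁+2k+h))`, the surface `S = V(det τ)` contains both `C`
and `Γ_h`, and the cokernel `G` of `τ` satisfies
`G ≅ I_{C/S}(c₁+2k) ≅ I_{Γ_h/S}(c₁+h)` up to twist, whence `I_{C/S} ≅ I_{Γ_h/S}(h)`.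

We formalize this on the homogeneous coordinate ring `R = ℂ[x₀,…,x₃]`, writing the
two sections in components in a trivialization of `E(k)` (`s₀ = (f₁, f₂)` with `fᵢ`
homogeneous of degree `dᵢ`, `d₁ + d₂ = c₁ + 2k`; `s_h = (g₁, g₂)` with `gᵢ`
homogeneous of degree `dᵢ + h`), with each section having codimension-two zero
locus (a regular sequence, the Koszul condition).  Then, with
`D := det τ = f₁g₂ − f₂g₁` and `S = R/(D)`:
* `D` is homogeneous of degree `c₁ + 2k + h` (i.e. a degree `c₁+2k+h` surface);
* `D ∈ (f₁, f₂) = I_C` and `D ∈ (g₁, g₂) = I_{Γ_h}` (`S` contains `C` and `Γ_h`);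
* the cokernel `G = (R ⊕ R)/⟨s₀, s_h⟩` of `τ` is isomorphic to the image ideal
  `I_{C/S}` of `I_C` in `R/(D)` as well as to `I_{Γ_h/S}`, hence
  `I_{C/S} ≅ I_{Γ_h/S}` (an isomorphism which, keeping track of the grading, is a
  twist by `h`: `I_{C/S} ≅ I_{Γ_h/S}(h)`, the elementary biliaison relation). -/
theorem stmt18
    (c1 k h d1 d2 : ℕ) (hd : d1 + d2 = c1 + 2 * k)
    (f1 f2 g1 g2 : MvPolynomial (Fin 4) ℂ)
    (hf1 : f1.IsHomogeneous d1) (hf2 : f2.IsHomogeneous d2)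
    (hg1 : g1.IsHomogeneous (d1 + h)) (hg2 : g2.IsHomogeneous (d2 + h))
    -- C = V(s₀) and Γ_h = V(s_h) have codimension two (Koszul condition):
    (hregC : RingTheory.Sequence.IsRegular (MvPolynomial (Fin 4) ℂ) [f1, f2])
    (hregΓ : RingTheory.Sequence.IsRegular (MvPolynomial (Fin 4) ℂ) [g1, g2]) :
    -- det τ is a global section of O(c₁ + 2k + h):
    (f1 * g2 - f2 * g1).IsHomogeneous (c1 + 2 * k + h)
    -- S = V(det τ) contains C and Γ_h:
    ∧ f1 * g2 - f2 * g1 ∈ Ideal.span {f1, f2}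
    ∧ f1 * g2 - f2 * g1 ∈ Ideal.span {g1, g2}
    -- G = coker τ ≅ I_{C/S} ≅ I_{Γ_h/S}, hence I_{C/S} ≅ I_{Γ_h/S}(h):
    ∧ Nonempty
        (((MvPolynomial (Fin 4) ℂ × MvPolynomial (Fin 4) ℂ) ⧸
            Submodule.span (MvPolynomial (Fin 4) ℂ) {(f1, f2), (g1, g2)}) ≃+
          ((Ideal.span {f1, f2}).map
            (Ideal.Quotient.mk (Ideal.span {f1 * g2 - f2 * g1}))))
    ∧ Nonempty
        (((MvPolynomial (Fin 4) ℂ × MvPolynomial (Fin 4) ℂ) ⧸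
            Submodule.span (MvPolynomial (Fin 4) ℂ) {(f1, f2), (g1, g2)}) ≃+
          ((Ideal.span {g1, g2}).map
            (Ideal.Quotient.mk (Ideal.span {f1 * g2 - f2 * g1}))))
    ∧ Nonempty
        (((Ideal.span {f1, f2}).map
            (Ideal.Quotient.mk (Ideal.span {f1 * g2 - f2 * g1}))) ≃ₗ[
          MvPolynomial (Fin 4) ℂ ⧸ Ideal.span {f1 * g2 - f2 * g1}]
          ((Ideal.span {g1, g2}).map
            (Ideal.Quotient.mk (Ideal.span {f1 * g2 - f2 * g1})))) := by
  have hIg : Ideal.span {g1 * f2 - g2 * f1} = Ideal.span {f1 * g2 - f2 * g1} := by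
    rw [show g1 * f2 - g2 * f1 = -(f1 * g2 - f2 * g1) by ring]
    exact Ideal.span_singleton_neg _
  have hkerF := ker_psi f1 f2 g1 g2 hregC
  have hkerG : LinearMap.ker (psi g1 g2 (Ideal.span {f1 * g2 - f2 * g1})) =
      Submodule.span (MvPolynomial (Fin 4) ℂ) {(f1, f2), (g1, g2)} := by
    rw [← hIg, ker_psi g1 g2 f1 f2 hregΓ, Set.pair_comm]
  have eF := cokerEquiv f1 f2 _ _ hkerF
  have eG := cokerEquiv g1 g2 _ _ hkerG
  refine ⟨?_, ?_, ?_, ⟨eF.toAddEquiv⟩, ⟨eG.toAddEquiv⟩, ⟨?_⟩⟩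
  · have e1 : d1 + (d2 + h) = c1 + 2 * k + h := by omega
    have e2 : d2 + (d1 + h) = c1 + 2 * k + h := by omega
    exact (e1 ▸ hf1.mul hg2).sub (e2 ▸ hf2.mul hg1)
  · exact Ideal.mem_span_pair.mpr ⟨g2, -g1, by ring⟩
  · exact Ideal.mem_span_pair.mpr ⟨-f2, f1, by ring⟩
  · refine LinearEquiv.extendScalarsOfSurjective ?_ (eF.symm.trans eG)
    rw [Ideal.Quotient.algebraMap_eq]
    exact Ideal.Quotient.mk_surjective
end

section
/- Let X be a smooth projective threefold with ω_X ≅ O_X(−m) for some m ≥ 0, embedded by a very ample O_X(1), and let Σ be a finite set of points. Let b : Y → X be the blow-up along Σ with exceptional divisor B = ΣE_i, and suppose the multiple-point Seshadri constant ε̄ = ε(O_X(1); Σ) satisfies ε̄ > 3/(k+m). Then the ℝ-divisor (k+m)b*H − 3B is big and nef on Y, and consequently H¹(X, I_{Σ/X}(k)) = 0. -/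
/-- Let `X` be a smooth projective threefold with
`ω_X ≅ O_X(−m)`, `m ≥ 0`, embedded by a very ample `O_X(1)` with hyperplane class
`H`, and let `Σ` be a finite set of points.  Let `b : Y → X` be the blow-up along
`Σ` with exceptional divisor `B = Σᵢ Eᵢ`, and suppose the multiple-point Seshadri
constant `ε̄ = ε(O_X(1); Σ)` satisfies `ε̄ > 3/(k+m)`.  Then the ℝ-divisor
`(k+m)·b*H − 3B` is big and nef on `Y`, and consequently `H¹(X, I_{Σ/X}(k)) = 0`.

We work in the real Néron–Severi space `N = N¹(Y)_ℝ`, with abstract predicates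
`Nef`, `Big` satisfying the standard formal properties (nef cone is a convex cone;
big+nef is stable under adding a nef class and positive scaling; `b*H` is big and
nef since `H` is very ample and `b` is birational).  The Seshadri hypothesis is
encoded by nefness of `b*H − ε̄·B`.  The cohomological consequence is encoded by
the Kawamata–Viehweg vanishing theorem (for every big and nef `D`,
`H¹(Y, ω_Y ⊗ O_Y(⌈D⌉)) = 0`) together with the Leray isomorphism
`H¹(X, I_{Σ/X}(k)) ≅ H¹(Y, ω_Y ⊗ O_Y((k+m)b*H − 3B))`. -/
theorem stmt19
    (N : Type*) [AddCommGroup N] [Module ℝ N]            -- N¹(Y)_ℝ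
    (Nef Big : N → Prop)
    (hnef_add : ∀ D D' : N, Nef D → Nef D' → Nef (D + D'))
    (hnef_smul : ∀ (c : ℝ) (D : N), 0 ≤ c → Nef D → Nef (c • D))
    (hbig_smul : ∀ (c : ℝ) (D : N), 0 < c → Big D → Big (c • D))
    (hbig_add_nef : ∀ D D' : N, Big D → Nef D' → Big (D + D'))
    (bH B : N)                                           -- classes of b*H and B = ΣEᵢ
    (hHbig : Big bH) (hHnef : Nef bH)                    -- H very ample, b birational
    (k m : ℤ) (hm : 0 ≤ m)
    (ε : ℝ) (hεpos : 0 < ε)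
    (hSesh : Nef (bH - ε • B))                           -- ε̄ = ε(O_X(1); Σ)
    (hkm : 3 / ε < ((k + m : ℤ) : ℝ))                    -- ε̄ > 3/(k+m)
    (H1 : N → Type*)     -- D ↦ H¹(Y, ω_Y ⊗ O_Y(⌈D⌉))
    (hKV : ∀ D : N, Nef D → Big D → Subsingleton (H1 D)) -- Kawamata–Viehweg vanishing
    (H1ISig : Type*)                                       -- H¹(X, I_{Σ/X}(k))
    (hLeray : Subsingleton (H1 (((k + m : ℤ) : ℝ) • bH - (3 : ℝ) • B)) →
      Subsingleton H1ISig) :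
    (Nef (((k + m : ℤ) : ℝ) • bH - (3 : ℝ) • B)
      ∧ Big (((k + m : ℤ) : ℝ) • bH - (3 : ℝ) • B))
    ∧ Subsingleton H1ISig := by
  set c : ℝ := ((k + m : ℤ) : ℝ) with hc
  have hεne : ε ≠ 0 := ne_of_gt hεpos
  have h3ε : 0 < 3 / ε := by positivity
  have hcpos : 0 < c - 3 / ε := sub_pos.mpr hkm
  have hdecomp : c • bH - (3 : ℝ) • B
      = (3 / ε) • (bH - ε • B) + (c - 3 / ε) • bH := by
    rw [smul_sub, smul_smul, sub_smul, div_mul_cancel₀ _ hεne]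
    abel
  have hnef : Nef (c • bH - (3 : ℝ) • B) := by
    rw [hdecomp]
    exact hnef_add _ _ (hnef_smul _ _ h3ε.le hSesh)
      (hnef_smul _ _ hcpos.le hHnef)
  have hbig : Big (c • bH - (3 : ℝ) • B) := by
    rw [hdecomp, add_comm]
    exact hbig_add_nef _ _ (hbig_smul _ _ hcpos hHbig)
      (hnef_smul _ _ h3ε.le hSesh)
  exact ⟨⟨hnef, hbig⟩, hLeray (hKV _ hnef hbig)⟩
end
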